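/- Let n ≥ 1, let (X, 𝔄) be a measurable space, let f_1, …, f_n : X → ℝ be measurable functions, and let μ be a measure on (X, 𝔄) such that each f_i is μ-integrable, with s_i := ∫_X f_i dμ for i = 1, …, n. Then there exist a natural number K with K ≤ n, pairwise distinct points x_1, …, x_K ∈ X, and positive real numbers c_1, …, c_K such that s_i = Σ_{j=1}^K c_j · f_i(x_j) for all i = 1, …, n. -/

import Mathlib

set_option maxHeartbeats 1000000

open MeasureTheory Set Function
open scoped NNReal ENNReal

section PosSpan

variable {X : Type*} {E : Type*} [NormedAddCommGroup E] [NormedSpace ℝ E]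

/-- The set of finite nonnegative combinations of values of `F`. -/
def posSpan (F : X → E) : Set E :=
  {v | ∃ (m : ℕ) (y : Fin m → X) (c : Fin m → ℝ), (∀ j, 0 ≤ c j) ∧ v = ∑ j, c j • F (y j)}

lemma zero_mem_posSpan (F : X → E) : (0 : E) ∈ posSpan F :=
  ⟨0, Fin.elim0, Fin.elim0, fun j => j.elim0, by simp⟩

lemma mem_posSpan_self (F : X → E) (x : X) : F x ∈ posSpan F :=
  ⟨1, fun _ => x, fun _ => 1, fun _ => zero_le_one, by simp⟩

lemma posSpan_smul_mem {F : X → E} {t : ℝ} (ht : 0 ≤ t) {v : E} (hv : v ∈ posSpan F) :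
    t • v ∈ posSpan F := by
  obtain ⟨m, y, c, hc, rfl⟩ := hv
  refine ⟨m, y, fun j => t * c j, fun j => mul_nonneg ht (hc j), ?_⟩
  rw [Finset.smul_sum]
  simp [mul_smul]

lemma posSpan_add_mem {F : X → E} {v w : E} (hv : v ∈ posSpan F) (hw : w ∈ posSpan F) :
    v + w ∈ posSpan F := by
  obtain ⟨m, y, c, hc, rfl⟩ := hv
  obtain ⟨m', y', c', hc', rfl⟩ := hw
  refine ⟨m + m', Fin.append y y', Fin.append c c', ?_, ?_⟩
  · intro j
    refine Fin.addCases (fun i => ?_) (fun i => ?_) j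
    · simpa [Fin.append_left] using hc i
    · simpa [Fin.append_right] using hc' i
  · rw [Fin.sum_univ_add]
    simp [Fin.append_left, Fin.append_right]

lemma convex_posSpan (F : X → E) : Convex ℝ (posSpan F) := by
  intro v hv w hw a b ha hb _
  exact posSpan_add_mem (posSpan_smul_mem ha hv) (posSpan_smul_mem hb hw)

lemma posSpan_closure_smul_mem {F : X → E} {t : ℝ} (ht : 0 ≤ t) {v : E}
    (hv : v ∈ closure (posSpan F)) : t • v ∈ closure (posSpan F) :=
  Set.MapsTo.closure (fun _ hw => posSpan_smul_mem ht hw) (continuous_const_smul t) hv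

end PosSpan

/-- Carathéodory-type lemma for cones: a nonnegative combination can be rewritten as a
positive combination over a linearly independent subfamily. -/
lemma caratheodory_cone {E : Type*} [AddCommGroup E] [Module ℝ E] :
    ∀ (m : ℕ) (w : Fin m → E) (c : Fin m → ℝ), (∀ j, 0 ≤ c j) →
      ∃ (K : ℕ) (g : Fin K → Fin m) (b : Fin K → ℝ),
        (∀ j, 0 < b j) ∧ LinearIndependent ℝ (w ∘ g) ∧
          ∑ j, c j • w j = ∑ j, b j • w (g j) := by
  intro m
  induction m with
  | zero =>
    intro w c _
    exact ⟨0, Fin.elim0, Fin.elim0, fun j => j.elim0, linearIndependent_empty_type, by simp⟩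
  | succ m ih =>
    intro w c hc
    have key : ∀ (c : Fin (m + 1) → ℝ), (∀ j, 0 ≤ c j) → (∃ j0, c j0 = 0) →
        ∃ (K : ℕ) (g : Fin K → Fin (m + 1)) (b : Fin K → ℝ),
          (∀ j, 0 < b j) ∧ LinearIndependent ℝ (w ∘ g) ∧
            ∑ j, c j • w j = ∑ j, b j • w (g j) := by
      rintro c hc ⟨j0, hj0⟩
      obtain ⟨K, g, b, hb, hli, hsum⟩ := ih (w ∘ j0.succAbove) (c ∘ j0.succAbove)
        (fun j => hc _)
      refine ⟨K, j0.succAbove ∘ g, b, hb, hli, ?_⟩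
      rw [Fin.sum_univ_succAbove (fun j => c j • w j) j0, hj0, zero_smul, zero_add]
      exact hsum
    by_cases hz : ∃ j0, c j0 = 0
    · exact key c hc hz
    · have hcpos : ∀ j, 0 < c j := fun j => (hc j).lt_of_ne (fun h => hz ⟨j, h.symm⟩)
      by_cases hli : LinearIndependent ℝ w
      · exact ⟨m + 1, id, c, hcpos, by simpa using hli, by simp⟩
      · obtain ⟨h, hsum0, j1, hj1⟩ := Fintype.not_linearIndependent_iff.mp hli
        have hex : ∃ h : Fin (m + 1) → ℝ, (∑ j, h j • w j = 0) ∧ ∃ j, 0 < h j := by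
          rcases Ne.lt_or_gt hj1 with hneg | hpos
          · refine ⟨-h, ?_, ⟨j1, by simpa using hneg⟩⟩
            simp only [Pi.neg_apply, neg_smul, Finset.sum_neg_distrib, hsum0, neg_zero]
          · exact ⟨h, hsum0, j1, hpos⟩
        clear hsum0 hj1 hli
        obtain ⟨h, hsum0, hexpos⟩ := hex
        have hTne : (Finset.univ.filter (fun j => 0 < h j)).Nonempty := by
          obtain ⟨j, hj⟩ := hexpos
          exact ⟨j, by simp [hj]⟩
        obtain ⟨j0, hj0T, hmin⟩ :=
          (Finset.univ.filter (fun j => 0 < h j)).exists_min_image (fun j => c j / h j) hTne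
        have hj0pos : 0 < h j0 := by simpa using hj0T
        set t := c j0 / h j0 with htdef
        have ht0 : 0 ≤ t := div_nonneg (hc j0) hj0pos.le
        set c' : Fin (m + 1) → ℝ := fun j => c j - t * h j with hc'def
        have hc' : ∀ j, 0 ≤ c' j := by
          intro j
          by_cases hj : 0 < h j
          · have h1 : t ≤ c j / h j := hmin j (by simp [hj])
            have h2 : t * h j ≤ (c j / h j) * h j := mul_le_mul_of_nonneg_right h1 hj.le
            rw [div_mul_cancel₀ _ hj.ne'] at h2
            simp only [hc'def]
            linarith
          · have h3 : t * h j ≤ 0 := mul_nonpos_of_nonneg_of_nonpos ht0 (not_lt.mp hj)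
            have := hc j
            simp only [hc'def]
            linarith
        have hc'j0 : c' j0 = 0 := by
          simp only [hc'def, htdef]
          rw [div_mul_cancel₀ _ hj0pos.ne']
          ring
        have hsum' : ∑ j, c' j • w j = ∑ j, c j • w j := by
          simp only [hc'def, sub_smul, Finset.sum_sub_distrib]
          rw [show ∑ j, (t * h j) • w j = t • ∑ j, h j • w j by
            rw [Finset.smul_sum]; simp [mul_smul]]
          rw [hsum0, smul_zero, sub_zero]
        obtain ⟨K, g, b, hb, hli', hsum''⟩ := key c' hc' ⟨j0, hc'j0⟩
        exact ⟨K, g, b, hb, hli', by rw [← hsum', hsum'']⟩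

section Analytic

variable {E : Type*} [NormedAddCommGroup E] [NormedSpace ℝ E] [FiniteDimensional ℝ E]

lemma posSpan_interior_nonempty {X : Type*} {F : X → E}
    (hspan : Submodule.span ℝ (Set.range F) = ⊤) :
    (interior (posSpan F)).Nonempty := by
  rw [(convex_posSpan F).interior_nonempty_iff_affineSpan_eq_top]
  rw [AffineSubspace.affineSpan_eq_top_iff_vectorSpan_eq_top_of_nonempty ℝ E E ⟨0, zero_mem_posSpan F⟩]
  rw [eq_top_iff, ← hspan, Submodule.span_le]
  rintro v ⟨x, rfl⟩
  have := vsub_mem_vectorSpan ℝ (mem_posSpan_self F x) (zero_mem_posSpan F)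
  simpa using this

variable [MeasurableSpace E] [BorelSpace E]

lemma integral_mem_closure_posSpan {X : Type*} [MeasurableSpace X]
    (μ : Measure X) (F : X → E) (hF : Measurable F) (hFi : Integrable F μ) :
    ∫ x, F x ∂μ ∈ closure (posSpan F) := by
  classical
  set A : Set X := (F ⁻¹' {0})ᶜ with hAdef
  have hA : MeasurableSet A := (hF (measurableSet_singleton 0)).compl
  have hmemA : ∀ x, x ∈ A ↔ F x ≠ 0 := fun x => Iff.rfl
  have hzero : ∫ x in Aᶜ, F x ∂μ = 0 := by
    have h0 : F =ᵐ[μ.restrict Aᶜ] (fun _ => 0) := by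
      filter_upwards [ae_restrict_mem hA.compl] with x hx
      simpa [hAdef] using hx
    rw [integral_congr_ae h0, integral_zero]
  have step1 : ∫ x, F x ∂μ = ∫ x in A, F x ∂μ := by
    rw [← integral_add_compl hA hFi, hzero, add_zero]
  set ρ := μ.restrict A with hρ
  have hFiρ : Integrable F ρ := hFi.restrict
  set w : X → ℝ≥0 := fun x => min 1 ‖F x‖₊ with hwdef
  have hwmeas : Measurable w := measurable_const.min hF.nnnorm
  set ν := ρ.withDensity (fun x => (w x : ℝ≥0∞)) with hν
  haveI : IsFiniteMeasure ν := by
    constructor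
    rw [hν, withDensity_apply _ MeasurableSet.univ, Measure.restrict_univ]
    calc ∫⁻ x, (w x : ℝ≥0∞) ∂ρ ≤ ∫⁻ x, (‖F x‖₊ : ℝ≥0∞) ∂ρ :=
          lintegral_mono (fun x => ENNReal.coe_le_coe.2 (min_le_right _ _))
      _ < ⊤ := hFiρ.2
  set G : X → E := fun x => ((w x : ℝ))⁻¹ • F x with hG
  have hwpos : ∀ x ∈ A, (0 : ℝ≥0) < w x := by
    intro x hx
    have : F x ≠ 0 := (hmemA x).mp hx
    exact lt_min one_pos (by simpa using this)
  have hWG_eq : (fun x => w x • G x) =ᵐ[ρ] F := by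
    filter_upwards [ae_restrict_mem hA] with x hx
    have hne : (w x : ℝ) ≠ 0 := by exact_mod_cast (hwpos x hx).ne'
    simp only [hG, NNReal.smul_def]
    rw [smul_inv_smul₀ hne]
  have hGint : Integrable G ν :=
    (integrable_withDensity_iff_integrable_smul hwmeas).mpr (hFiρ.congr hWG_eq.symm)
  have hGint_eq : ∫ x, G x ∂ν = ∫ x in A, F x ∂μ := by
    rw [hν, integral_withDensity_eq_integral_smul hwmeas]
    exact integral_congr_ae hWG_eq
  have hGmemρ : ∀ᵐ x ∂ρ, G x ∈ closure (posSpan F) := by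
    filter_upwards [ae_restrict_mem hA] with x hx
    exact subset_closure (posSpan_smul_mem (inv_nonneg.mpr (w x).coe_nonneg)
      (mem_posSpan_self F x))
  have hGmem : ∀ᵐ x ∂ν, G x ∈ closure (posSpan F) :=
    hGmemρ.filter_mono (withDensity_absolutelyContinuous ρ _).ae_le
  by_cases hν0 : ν = 0
  · rw [step1, ← hGint_eq, hν0, integral_zero_measure]
    exact subset_closure (zero_mem_posSpan F)
  · haveI : NeZero ν := ⟨hν0⟩
    have havg := (convex_posSpan F).closure.average_mem isClosed_closure hGmem hGint
    have htne : (ν Set.univ).toReal ≠ 0 :=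
      ENNReal.toReal_ne_zero.mpr ⟨by simpa [Measure.measure_univ_eq_zero] using hν0,
        measure_ne_top _ _⟩
    have hint : ∫ x, G x ∂ν = (ν Set.univ).toReal • ⨍ x, G x ∂ν := by
      rw [average_eq, measureReal_def, smul_inv_smul₀ htne]
    rw [step1, ← hGint_eq, hint]
    exact posSpan_closure_smul_mem ENNReal.toReal_nonneg havg

end Analytic

lemma combo_aux {W : Type*} [AddCommGroup W] [Module ℝ W] (bpt sW : W) (ε : ℝ)
    (h1ε : (0:ℝ) < 1 + ε) :
    (ε / (1 + ε)) • bpt + (1 / (1 + ε)) • (sW + ε • (sW - bpt)) = sW := by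
  match_scalars <;> field_simp <;> ring

set_option maxHeartbeats 1000000 in
lemma richter_aux :
    ∀ (d : ℕ) (E : Type) [instE1 : NormedAddCommGroup E] [instE2 : NormedSpace ℝ E]
      [instE3 : FiniteDimensional ℝ E] [instE4 : MeasurableSpace E] [instE5 : BorelSpace E]
      (X : Type*) [instX : MeasurableSpace X]
      (μ : Measure X) (F : X → E), Measurable F → Integrable F μ →
      Module.finrank ℝ (Submodule.span ℝ (Set.range F)) ≤ d →
      ∃ (K : ℕ) (x : Fin K → X) (c : Fin K → ℝ),
        (∀ j, 0 < c j) ∧ LinearIndependent ℝ (F ∘ x) ∧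
          ∫ t, F t ∂μ = ∑ j, c j • F (x j) := by
  intro d
  induction d with
  | zero =>
    intro E _ _ _ _ _ X _ μ F hF hFi hrank
    have hspan : Submodule.span ℝ (Set.range F) = ⊥ :=
      Submodule.finrank_eq_zero.mp (Nat.le_zero.mp hrank)
    have hF0 : ∀ x, F x = 0 := by
      intro x
      have : F x ∈ Submodule.span ℝ (Set.range F) := Submodule.subset_span ⟨x, rfl⟩
      rw [hspan] at this
      simpa using this
    refine ⟨0, Fin.elim0, Fin.elim0, fun j => j.elim0, linearIndependent_empty_type, ?_⟩
    simp [hF0]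
  | succ d ih =>
    intro E _ _ _ _ _ X _ μ F hF hFi hrank
    classical
    set W : Submodule ℝ E := Submodule.span ℝ (Set.range F) with hW
    haveI : BorelSpace W := Subtype.borelSpace (W : Set E)
    set FW : X → W := fun x => ⟨F x, Submodule.subset_span ⟨x, rfl⟩⟩ with hFWdef
    have hFWmeas : Measurable FW := hF.subtype_mk
    have hFWi : Integrable FW μ :=
      Integrable.mono' hFi.norm hFWmeas.aestronglyMeasurable
        (Filter.Eventually.of_forall fun x => le_of_eq rfl)
    have hspanW : Submodule.span ℝ (Set.range FW) = ⊤ := by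
      apply Submodule.map_injective_of_injective W.injective_subtype
      rw [Submodule.map_span, Submodule.map_top, Submodule.range_subtype]
      rw [← Set.range_comp]
      exact hW.symm
    set sW := ∫ t, FW t ∂μ with hsW
    have hsval : (sW : E) = ∫ t, F t ∂μ := by
      have := ContinuousLinearMap.integral_comp_comm W.subtypeL hFWi
      simpa using this.symm
    have hsWclos : sW ∈ closure (posSpan FW) :=
      integral_mem_closure_posSpan μ FW hFWmeas hFWi
    obtain ⟨bpt, hbpt⟩ := posSpan_interior_nonempty (F := FW) hspanW
    by_cases hsint : sW ∈ interior (closure (posSpan FW))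
    · -- interior case : sW ∈ posSpan FW
      have hcontat : ContinuousAt (fun ε : ℝ => sW + ε • (sW - bpt)) 0 :=
        (continuous_const.add ((continuous_id.smul continuous_const))).continuousAt
      have hev : ∀ᶠ ε : ℝ in nhds 0,
          sW + ε • (sW - bpt) ∈ interior (closure (posSpan FW)) := by
        apply hcontat.eventually_mem (isOpen_interior.mem_nhds ?_)
        simpa using hsint
      have hev' : ∀ᶠ ε : ℝ in nhdsWithin 0 (Set.Ioi 0),
          (sW + ε • (sW - bpt) ∈ interior (closure (posSpan FW))) ∧ 0 < ε :=
        (hev.filter_mono nhdsWithin_le_nhds).and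
          (eventually_mem_nhdsWithin.mono fun x hx => hx)
      obtain ⟨ε, hεmem, hεpos⟩ := hev'.exists
      have h1ε : (0:ℝ) < 1 + ε := by linarith
      have hcombo := combo_aux bpt sW ε h1ε
      have hsWD : sW ∈ posSpan FW := by
        have hmem := (convex_posSpan FW).combo_interior_closure_mem_interior
          (a := ε / (1 + ε)) (b := 1 / (1 + ε)) hbpt
          (interior_subset hεmem) (div_pos hεpos h1ε)
          (by positivity) (by field_simp; ring)
        rw [hcombo] at hmem
        exact interior_subset hmem
      obtain ⟨m, y, c, hc, hsumD⟩ := hsWD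
      obtain ⟨K, g, b, hb, hli, hsum2⟩ := caratheodory_cone m (FW ∘ y) c hc
      refine ⟨K, y ∘ g, b, hb, ?_, ?_⟩
      · exact hli.map' W.subtype W.ker_subtype
      · have h2 : sW = ∑ j, b j • FW (y (g j)) := hsumD.trans hsum2
        rw [← hsval, h2]
        push_cast
        rfl
    · -- boundary case : separation and induction
      obtain ⟨f, hf⟩ := geometric_hahn_banach_open_point
        ((convex_posSpan FW).closure.interior) isOpen_interior hsint
      have hUne : (interior (closure (posSpan FW))).Nonempty :=
        ⟨bpt, interior_mono subset_closure hbpt⟩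
      have hclosU : closure (posSpan FW) ⊆ closure (interior (posSpan FW)) := by
        intro v hv
        have hcont : Continuous (fun t : ℝ => t • bpt + (1 - t) • v) := by
          continuity
        have htend : Filter.Tendsto (fun t : ℝ => t • bpt + (1 - t) • v)
            (nhdsWithin 0 (Set.Ioi 0)) (nhds v) := by
          have := (hcont.tendsto 0).mono_left (nhdsWithin_le_nhds (a := (0:ℝ)) (s := Set.Ioi 0))
          simpa using this
        apply mem_closure_of_tendsto htend
        have hlt1 : ∀ᶠ t : ℝ in nhdsWithin 0 (Set.Ioi 0), t < 1 :=
          Filter.Eventually.filter_mono nhdsWithin_le_nhds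
            (isOpen_Iio.eventually_mem (show (0:ℝ) ∈ Set.Iio 1 by norm_num))
        filter_upwards [hlt1, eventually_mem_nhdsWithin] with t ht1 ht0
        exact (convex_posSpan FW).combo_interior_closure_mem_interior
          (a := t) (b := 1 - t) hbpt hv ht0 (by linarith) (by ring)
      have hle : ∀ v ∈ closure (posSpan FW), f v ≤ f sW := by
        intro v hv
        have hsubset : closure (posSpan FW) ⊆ {z : W | f z ≤ f sW} := by
          refine Subset.trans hclosU ?_
          refine closure_minimal ?_ (isClosed_le f.continuous continuous_const)
          intro a ha
          exact (hf a (interior_mono subset_closure ha)).le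
        exact hsubset hv
      have hfs_nonneg : 0 ≤ f sW := by
        have := hle 0 (subset_closure (zero_mem_posSpan FW))
        simpa using this
      have hfD : ∀ v ∈ posSpan FW, f v ≤ 0 := by
        intro v hv
        by_contra hpos
        push_neg at hpos
        have ht0 : 0 ≤ (f sW + 1) / f v := div_nonneg (by linarith) hpos.le
        have hh := hle (((f sW + 1) / f v) • v)
          (subset_closure (posSpan_smul_mem ht0 hv))
        rw [_root_.map_smul, smul_eq_mul, div_mul_cancel₀ _ hpos.ne'] at hh
        linarith
      set lam : W →L[ℝ] ℝ := -f with hlamdef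
      have hlam_nonneg : ∀ x : X, 0 ≤ lam (FW x) := by
        intro x
        have := hfD _ (mem_posSpan_self FW x)
        simp only [hlamdef, ContinuousLinearMap.neg_apply]
        linarith
      have hlam_int : Integrable (fun x => lam (FW x)) μ := lam.integrable_comp hFWi
      have hint0 : ∫ x, lam (FW x) ∂μ = 0 := by
        have h1 : ∫ x, lam (FW x) ∂μ = lam sW :=
          ContinuousLinearMap.integral_comp_comm lam hFWi
        have h2 : lam sW ≤ 0 := by
          simp only [hlamdef, ContinuousLinearMap.neg_apply]
          linarith
        have h3 : 0 ≤ ∫ x, lam (FW x) ∂μ := integral_nonneg hlam_nonneg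
        linarith
      have hae0 : ∀ᵐ x ∂μ, lam (FW x) = 0 :=
        (integral_eq_zero_iff_of_nonneg (fun x => hlam_nonneg x) hlam_int).mp hint0
      have hlamne : lam.toLinearMap ≠ 0 := by
        obtain ⟨u, hu⟩ := hUne
        intro h0
        have h1 : f u < f sW := hf u hu
        have h2 : ∀ z : W, f z = 0 := by
          intro z
          have : lam z = 0 := by
            have := congrFun (congrArg (fun (g : W →ₗ[ℝ] ℝ) => (g : W → ℝ)) h0) z
            simpa using this
          simp only [hlamdef, ContinuousLinearMap.neg_apply] at this
          linarith
        rw [h2 u, h2 sW] at h1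
        exact lt_irrefl _ h1
      have hKrank : Module.finrank ℝ (LinearMap.ker lam.toLinearMap) ≤ d := by
        have hadd := LinearMap.finrank_range_add_finrank_ker lam.toLinearMap
        have hrpos : 0 < Module.finrank ℝ (LinearMap.range lam.toLinearMap) := by
          rcases Nat.eq_zero_or_pos (Module.finrank ℝ (LinearMap.range lam.toLinearMap)) with h | h
          · exfalso
            have := Submodule.finrank_eq_zero.mp h
            rw [LinearMap.range_eq_bot] at this
            exact hlamne this
          · exact h
        have hWrank : Module.finrank ℝ W ≤ d + 1 := hrank
        omega
      set N : Set X := {x | lam (FW x) = 0} with hNdef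
      have hNmeas : MeasurableSet N := by
        have : Measurable (fun x => lam (FW x)) := lam.continuous.measurable.comp hFWmeas
        exact this (measurableSet_singleton 0)
      set F' : X → E := N.indicator F with hF'def
      have hF'meas : Measurable F' := hF.indicator hNmeas
      have hF'ae : F' =ᵐ[μ] F := by
        filter_upwards [hae0] with x hx
        have hxN : x ∈ N := hx
        simp [hF'def, Set.indicator_of_mem hxN]
      have hF'i : Integrable F' μ := hFi.congr hF'ae.symm
      have hrange' : Submodule.span ℝ (Set.range F') ≤
          Submodule.map W.subtype (LinearMap.ker lam.toLinearMap) := by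
        rw [Submodule.span_le]
        rintro v ⟨x, rfl⟩
        by_cases hx : x ∈ N
        · rw [hF'def, Set.indicator_of_mem hx]
          exact ⟨FW x, hx, rfl⟩
        · rw [hF'def, Set.indicator_of_notMem hx]
          exact Submodule.zero_mem _
      have hrank' : Module.finrank ℝ (Submodule.span ℝ (Set.range F')) ≤ d :=
        le_trans (le_trans (Submodule.finrank_mono hrange')
          (Submodule.finrank_map_le _ _)) hKrank
      obtain ⟨K, x, c, hcpos, hli, hsum⟩ := ih E X μ F' hF'meas hF'i hrank'
      have hFx : ∀ j, F' (x j) = F (x j) := by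
        intro j
        have hne : F' (x j) ≠ 0 := by
          have := hli.ne_zero j
          simpa using this
        by_cases hx : x j ∈ N
        · simp [hF'def, Set.indicator_of_mem hx]
        · exact absurd (by simp [hF'def, Set.indicator_of_notMem hx]) hne
      refine ⟨K, x, c, hcpos, ?_, ?_⟩
      · have hcomp : F ∘ x = F' ∘ x := by
          funext j
          simp [Function.comp, hFx j]
        rw [hcomp]
        exact hli
      · rw [show (∫ t, F t ∂μ) = ∫ t, F' t ∂μ from (integral_congr_ae hF'ae).symm, hsum]
        exact Finset.sum_congr rfl (fun j _ => by rw [hFx j])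

open MeasureTheory

/-- Richter's theorem: given finitely many `μ`-integrable measurable
functions `f 1, …, f n` on a measurable space `X`, there exist `K ≤ n`, pairwise
distinct points `x 1, …, x K ∈ X`, and positive weights `c 1, …, c K` such that
`∫ f i dμ = ∑ j, c j * f i (x j)` for all `i`. -/
theorem richter_theorem {X : Type*} [MeasurableSpace X] (n : ℕ) (hn : 1 ≤ n)
    (f : Fin n → X → ℝ) (hf : ∀ i, Measurable (f i))
    (μ : Measure X) (hint : ∀ i, Integrable (f i) μ) :
    ∃ (K : ℕ) (_ : K ≤ n) (x : Fin K → X) (c : Fin K → ℝ),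
      Function.Injective x ∧ (∀ j, 0 < c j) ∧
      ∀ i, ∫ t, f i t ∂μ = ∑ j, c j * f i (x j) := by
  classical
  set F : X → (Fin n → ℝ) := fun t i => f i t with hFdef
  have hFmeas : Measurable F := measurable_pi_lambda _ (fun i => hf i)
  have hFi : Integrable F μ := by
    have hsumint : Integrable (fun t => ∑ i, |f i t|) μ :=
      integrable_finset_sum _ (fun i _ => (hint i).abs)
    refine Integrable.mono' hsumint hFmeas.aestronglyMeasurable ?_
    refine Filter.Eventually.of_forall (fun t => ?_)
    rw [pi_norm_le_iff_of_nonneg (Finset.sum_nonneg (fun i _ => abs_nonneg _))]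
    intro i
    calc ‖F t i‖ = |f i t| := Real.norm_eq_abs _
      _ ≤ ∑ i', |f i' t| := Finset.single_le_sum (f := fun i' => |f i' t|)
        (fun i' _ => abs_nonneg _) (Finset.mem_univ i)
  have hrank : Module.finrank ℝ (Submodule.span ℝ (Set.range F)) ≤ n := by
    calc Module.finrank ℝ (Submodule.span ℝ (Set.range F)) ≤
        Module.finrank ℝ (Fin n → ℝ) := Submodule.finrank_le _
      _ = n := by simp
  obtain ⟨K, x, c, hcpos, hli, hsum⟩ := richter_aux n (Fin n → ℝ) X μ F hFmeas hFi hrank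
  have hKn : K ≤ n := by
    have := hli.fintype_card_le_finrank
    simpa using this
  refine ⟨K, hKn, x, c, ?_, hcpos, ?_⟩
  · intro a b hab
    exact hli.injective (show (F ∘ x) a = (F ∘ x) b by simp [Function.comp, hab])
  · intro i
    have h1 : ∫ t, f i t ∂μ = (∫ t, F t ∂μ) i := by
      have := (ContinuousLinearMap.proj (R := ℝ) (φ := fun _ : Fin n => ℝ) i).integral_comp_comm hFi
      simpa [hFdef] using this
    rw [h1, hsum]
    simp [Finset.sum_apply, smul_eq_mul, hFdef]
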